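/- Let m ≥ 1. The function F : ℂ^m → ℝ defined by F(a_0,…,a_{m−1}) = max{Re λ : λ is a root of the polynomial λ^m − a_{m−1}λ^{m−1} − ⋯ − a_1λ − a_0} is continuous on ℂ^m. -/

import Mathlib

open Polynomial Finset

namespace MaxReRootsAux

variable (m : ℕ)

/-- The monic polynomial with prescribed roots. -/
noncomputable def pr (r : Fin m → ℂ) : ℂ[X] := ∏ i, (X - C (r i))

lemma pr_monic (r : Fin m → ℂ) : (pr m r).Monic :=
  monic_prod_of_monic _ _ fun i _ => monic_X_sub_C (r i)

lemma pr_natDegree (r : Fin m → ℂ) : (pr m r).natDegree = m := by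
  rw [pr, natDegree_prod_of_monic _ _ fun i _ => monic_X_sub_C (r i)]
  simp

/-- The coefficient map. -/
noncomputable def phi (r : Fin m → ℂ) : Fin m → ℂ := fun j => -((pr m r).coeff j)

lemma eval_pr (r : Fin m → ℂ) (lam : ℂ) :
    (pr m r).eval lam = lam ^ m - ∑ j : Fin m, phi m r j * lam ^ (j : ℕ) := by
  have hc : (pr m r).coeff m = 1 := by
    have := (pr_monic m r).coeff_natDegree
    rwa [pr_natDegree] at this
  rw [eval_eq_sum_range, pr_natDegree, Finset.sum_range_succ, hc, one_mul,
    ← Fin.sum_univ_eq_sum_range (fun k => (pr m r).coeff k * lam ^ k)]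
  simp [phi, neg_mul, Finset.sum_neg_distrib, sub_neg_eq_add, add_comm]

lemma root_set_eq (r : Fin m → ℂ) :
    {lam : ℂ | lam ^ m = ∑ j : Fin m, phi m r j * lam ^ (j : ℕ)} = Set.range r := by
  ext lam
  have : lam ^ m = ∑ j : Fin m, phi m r j * lam ^ (j : ℕ) ↔ (pr m r).eval lam = 0 := by
    rw [eval_pr, sub_eq_zero, eq_comm]
  rw [Set.mem_setOf_eq, this, pr, eval_prod, Finset.prod_eq_zero_iff]
  simp [sub_eq_zero, eq_comm, Set.mem_range]

lemma continuous_phi : Continuous (phi m) := by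
  apply continuous_pi
  intro j
  have key : ∀ r : Fin m → ℂ, phi m r j =
      -∑ t ∈ Finset.univ.powersetCard (m - j), ∏ i ∈ t, (-(r i)) := by
    intro r
    have h1 : pr m r = ∏ i, (X + C (-(r i))) := by
      simp [pr, sub_eq_add_neg]
    rw [phi, h1, Finset.prod_X_add_C_coeff _ _ (by simpa using j.2.le)]
    simp
  simp only [funext key]
  exact (continuous_finset_sum _ fun t _ =>
    continuous_finset_prod _ fun i _ => (continuous_apply i).neg).neg

lemma surjective_phi (hm : 1 ≤ m) : Function.Surjective (phi m) := by
  intro M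
  set q : ℂ[X] := X ^ m - ∑ j : Fin m, C (M j) * X ^ (j : ℕ) with hq
  have hdeg : (∑ j : Fin m, C (M j) * X ^ (j : ℕ)).degree < (m : WithBot ℕ) := by
    apply lt_of_le_of_lt (degree_sum_le _ _)
    rw [Finset.sup_lt_iff (by exact_mod_cast WithBot.bot_lt_coe m)]
    intro j _
    refine lt_of_le_of_lt (degree_C_mul_X_pow_le _ _) ?_
    exact_mod_cast j.2
  have hqm : q.Monic := monic_X_pow_sub (by exact_mod_cast hdeg)
  have hnd : (∑ j : Fin m, C (M j) * X ^ (j : ℕ)).natDegree < m := by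
    rcases eq_or_ne (∑ j : Fin m, C (M j) * X ^ (j : ℕ)) 0 with h | h
    · rw [h, natDegree_zero]; omega
    · exact (natDegree_lt_iff_degree_lt h).mpr (by exact_mod_cast hdeg)
  have hqd : q.natDegree = m := by
    rw [hq, natDegree_sub_eq_left_of_natDegree_lt (by rwa [natDegree_X_pow]),
      natDegree_X_pow]
  have hsplit : Splits q := IsAlgClosed.splits q
  have hcard : Multiset.card q.roots = m := by
    rw [splits_iff_card_roots.mp hsplit, hqd]
  have hlen : q.roots.toList.length = m := by rw [Multiset.length_toList, hcard]
  set l := q.roots.toList with hl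
  refine ⟨fun i => l.get (Fin.cast hlen.symm i), ?_⟩
  have hprod : pr m (fun i => l.get (Fin.cast hlen.symm i)) = q := by
    have h1 : pr m (fun i => l.get (Fin.cast hlen.symm i)) =
        ∏ i : Fin l.length, (X - C (l.get i)) :=
      Fintype.prod_equiv (finCongr hlen.symm) _ _ fun i => rfl
    have h2 : ∏ i : Fin l.length, (X - C (l.get i)) =
        (l.map fun a => X - C a).prod := by
      rw [← List.prod_ofFn]
      conv_rhs => rw [← List.ofFn_get l, List.map_ofFn]
      rfl
    have h3 : (q.roots.map fun a => X - C a).prod = q := by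
      have := C_leadingCoeff_mul_prod_multiset_X_sub_C (p := q) (by rw [hcard, hqd])
      rwa [hqm.leadingCoeff, map_one, one_mul] at this
    have h4 : ((q.roots.toList).map fun a => X - C a).prod = q := by
      rw [← Multiset.prod_coe, ← Multiset.map_coe, Multiset.coe_toList]; exact h3
    rw [h1, h2]; exact h4
  funext j
  rw [phi, hprod, hq]
  rw [coeff_sub, coeff_X_pow, if_neg (by exact_mod_cast j.2.ne), finset_sum_coeff]
  simp only [coeff_C_mul, coeff_X_pow]
  rw [Finset.sum_eq_single j (fun k _ hk => by
    rw [if_neg (by simpa [Fin.val_eq_val] using hk.symm), mul_zero]) (by simp)]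
  simp

lemma proper_phi : IsProperMap (phi m) := by
  rw [isProperMap_iff_isCompact_preimage]
  refine ⟨continuous_phi m, fun K hK => ?_⟩
  obtain ⟨C, hC⟩ := hK.isBounded.subset_closedBall 0
  set D : ℝ := max C 0 with hD
  have hD0 : (0 : ℝ) ≤ D := le_max_right _ _
  have hDK : ∀ x ∈ K, ‖x‖ ≤ D := fun x hx =>
    le_trans (by simpa [dist_zero_right] using hC hx) (le_max_left _ _)
  apply IsCompact.of_isClosed_subset
    (isCompact_closedBall (0 : Fin m → ℂ) (D + 1))
    (hK.isClosed.preimage (continuous_phi m))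
  intro r hr
  rw [Set.mem_preimage] at hr
  rw [Metric.mem_closedBall, dist_zero_right,
    pi_norm_le_iff_of_nonneg (by linarith)]
  intro i
  have hroot : (pr m r).IsRoot (r i) := by
    rw [IsRoot.def, pr, eval_prod]
    exact Finset.prod_eq_zero (Finset.mem_univ i) (by simp)
  have hlt := hroot.norm_lt_cauchyBound (pr_monic m r).ne_zero
  have hcbd : cauchyBound (pr m r) ≤ ⟨D, hD0⟩ + 1 := by
    rw [cauchyBound, (pr_monic m r).leadingCoeff]
    simp only [nnnorm_one, div_one]
    refine add_le_add_left ?_ 1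
    apply Finset.sup_le
    intro k hk
    rw [Finset.mem_range, pr_natDegree] at hk
    have h1 : (pr m r).coeff k = -(phi m r ⟨k, hk⟩) := by simp [phi]
    have h2 : ‖phi m r ⟨k, hk⟩‖ ≤ D :=
      (norm_le_pi_norm (phi m r) ⟨k, hk⟩).trans (hDK _ hr)
    refine NNReal.coe_le_coe.mp (show _ ≤ D from ?_)
    simpa [h1, coe_nnnorm] using h2
  have hfin : (‖r i‖₊ : ℝ) ≤ D + 1 := by
    have := hlt.le.trans hcbd
    exact_mod_cast this
  simpa [coe_nnnorm] using hfin

theorem main (hm : 1 ≤ m) :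
    Continuous fun M : Fin m → ℂ =>
      sSup (Complex.re '' {lam : ℂ | lam ^ m = ∑ j : Fin m, M j * lam ^ (j : ℕ)}) := by
  have hne : Nonempty (Fin m) := ⟨⟨0, hm⟩⟩
  have hquot : Topology.IsQuotientMap (phi m) :=
    (proper_phi m).isClosedMap.isQuotientMap (continuous_phi m) (surjective_phi m hm)
  rw [hquot.continuous_iff]
  have key : ∀ r : Fin m → ℂ,
      sSup (Complex.re '' {lam : ℂ | lam ^ m = ∑ j : Fin m, phi m r j * lam ^ (j : ℕ)}) =
      Finset.univ.sup' Finset.univ_nonempty (fun i => (r i).re) := by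
    intro r
    rw [root_set_eq, Finset.sup'_eq_csSup_image]
    congr 1
    rw [Finset.coe_univ, Set.image_univ, ← Set.range_comp]
    rfl
  have : (fun r : Fin m → ℂ =>
      sSup (Complex.re '' {lam : ℂ | lam ^ m = ∑ j : Fin m, phi m r j * lam ^ (j : ℕ)})) =
      fun r => Finset.univ.sup' Finset.univ_nonempty (fun i => (r i).re) := funext key
  show Continuous (fun r : Fin m → ℂ =>
      sSup (Complex.re '' {lam : ℂ | lam ^ m = ∑ j : Fin m, phi m r j * lam ^ (j : ℕ)}))
  rw [this]
  exact Continuous.finset_sup'_apply Finset.univ_nonempty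
    fun i _ => Complex.continuous_re.comp (continuous_apply i)

end MaxReRootsAux

/-- For `m ≥ 1`, the function `F : ℂ^m → ℝ` sending `M = (a_0, …, a_{m-1})` to the maximum of
the real parts of the roots of the monic polynomial
`λ^m − a_{m−1} λ^{m−1} − ⋯ − a_1 λ − a_0` is continuous on `ℂ^m`.
(The maximum is expressed as the supremum of the set of real parts of the roots, which is a
finite nonempty set since the polynomial is monic of degree `m ≥ 1`.) -/
theorem max_re_roots_continuous (m : ℕ) (hm : 1 ≤ m) :
    Continuous fun M : Fin m → ℂ =>
      sSup (Complex.re '' {lam : ℂ | lam ^ m = ∑ j : Fin m, M j * lam ^ (j : ℕ)}) := by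
  exact MaxReRootsAux.main m hm
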